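/- Reachability splits at an intermediate node: if y ∈ reach γ x, then reach γ x = reach (γ \ y) x ∪ reach γ y. -/
import Mathlib


open scoped Classical

/-- A partial graph of type `T`: a finite partial map from nodes (natural
numbers, undefined on `0 = null`) to pairs of a value and an adjacency list. -/
structure PGraph (T : Type) where
  f : ℕ → Option (T × List ℕ)
  dom : Finset ℕ
  mem_dom : ∀ x, x ∈ dom ↔ (f x).isSome
  null_not_mem : f 0 = none

namespace PGraph

variable {T T' : Type}

def empty : PGraph T :=
  ⟨fun _ => none, ∅, by intro x; simp, rfl⟩

/-- Total (left-biased) union; meaningful when domains are disjoint. -/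
def union (γ₁ γ₂ : PGraph T) : PGraph T where
  f := fun x => match γ₁.f x with
    | some v => some v
    | none => γ₂.f x
  dom := γ₁.dom ∪ γ₂.dom
  mem_dom := by
    intro x
    rw [Finset.mem_union, γ₁.mem_dom, γ₂.mem_dom]
    cases h : γ₁.f x <;> simp [h]
  null_not_mem := by simp [γ₁.null_not_mem, γ₂.null_not_mem]

/-- The partial PCM join: defined iff the domains are disjoint. -/
noncomputable def join (γ₁ γ₂ : PGraph T) : Option (PGraph T) :=
  if Disjoint γ₁.dom γ₂.dom then some (union γ₁ γ₂) else none

/-- Filter (restriction) of a graph to a set of nodes. -/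
noncomputable def restrict (γ : PGraph T) (S : Set ℕ) : PGraph T where
  f := fun x => if x ∈ S then γ.f x else none
  dom := γ.dom.filter (fun x => x ∈ S)
  mem_dom := by
    intro x
    rw [Finset.mem_filter, γ.mem_dom]
    by_cases h : x ∈ S <;> simp [h]
  null_not_mem := by simp [γ.null_not_mem]

/-- Map combinator: apply `g` pointwise at each node. -/
def mapNode (g : ℕ → T × List ℕ → T' × List ℕ) (γ : PGraph T) : PGraph T' where
  f := fun x => (γ.f x).map (g x)
  dom := γ.dom
  mem_dom := by intro x; rw [γ.mem_dom]; cases h : γ.f x <;> simp [h]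
  null_not_mem := by simp [γ.null_not_mem]

/-- Erasure: replace every value with the unit value, keeping adjacency. -/
def erasure (γ : PGraph T) : PGraph Unit :=
  mapNode (fun _ p => ((), p.2)) γ

/-- Adjacency list of a node. -/
def adj (γ : PGraph T) (x : ℕ) : List ℕ :=
  ((γ.f x).map Prod.snd).getD []

/-- The value stored at a node, if any. -/
def val? (γ : PGraph T) (x : ℕ) : Option T :=
  (γ.f x).map Prod.fst

/-- Sinks: nodes appearing in some adjacency list. -/
def sinks (γ : PGraph T) : Set ℕ :=
  ⋃ x ∈ γ.dom, {y | y ∈ γ.adj x}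

/-- A graph is closed if it has no dangling edges. -/
def Closed (γ : PGraph T) : Prop :=
  sinks γ ⊆ insert 0 (↑γ.dom : Set ℕ)

/-- Remove a node (and its outgoing edges) from the graph. -/
def erase (γ : PGraph T) (y : ℕ) : PGraph T where
  f := fun x => if x = y then none else γ.f x
  dom := γ.dom.erase y
  mem_dom := by
    intro x
    rw [Finset.mem_erase, γ.mem_dom]
    by_cases h : x = y <;> simp [h]
  null_not_mem := by
    by_cases h : (0 : ℕ) = y <;> simp [h, γ.null_not_mem]

/-- Set of nodes reachable from `x` in `γ`. -/
def reach (γ : PGraph T) (x : ℕ) : Set ℕ :=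
  if h : x ∈ γ.dom then
    {x} ∪ ⋃ y ∈ γ.adj x, reach (γ.erase x) y
  else ∅
termination_by γ.dom.card
decreasing_by simpa [PGraph.erase] using Finset.card_erase_lt_of_mem h

/-- Summits of a path starting at `x`. -/
def summit (γ : PGraph T) (x : ℕ) : Set ℕ :=
  if h : x ∈ γ.dom then ⋃ y ∈ γ.adj x, summit (γ.erase x) y
  else {x}
termination_by γ.dom.card
decreasing_by simpa [PGraph.erase] using Finset.card_erase_lt_of_mem h

/-- All summits of a graph. -/
def summits (γ : PGraph T) : Set ℕ :=
  ⋃ x ∈ γ.dom, summit γ x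

/-- Nodes that lie on a cycle (reachable from one of their own children). -/
def cycles (γ : PGraph T) : Set ℕ :=
  {x | x ∈ ⋃ y ∈ γ.adj x, reach γ y}

/-- Targets of dangling edges. -/
def dangls (γ : PGraph T) : Set ℕ :=
  sinks γ \ ↑γ.dom

/-- Nodes forming cycles of size one. -/
def loops (γ : PGraph T) : Set ℕ :=
  {x | x ∈ γ.dom ∧ x ∈ γ.adj x}

/-- Filter by contents: keep nodes whose value lies in `V`. -/
noncomputable def filterVal (γ : PGraph T) (V : Set T) : PGraph T :=
  γ.restrict {x | ∃ v ∈ V, γ.val? x = some v}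

/-- Update the entry at node `x` (if present). -/
def update (γ : PGraph T) (x : ℕ) (p : T × List ℕ) : PGraph T where
  f := fun y => if y = x then (γ.f y).map (fun _ => p) else γ.f y
  dom := γ.dom
  mem_dom := by
    intro y
    rw [γ.mem_dom]
    by_cases h : y = x
    · subst h; cases hf : γ.f y <;> simp [hf]
    · simp [h]
  null_not_mem := by
    by_cases h : (0 : ℕ) = x
    · subst h; simp [γ.null_not_mem]
    · simp [h, γ.null_not_mem]

/-- Binary graphs: every adjacency list has exactly two elements. -/
def Binary (γ : PGraph T) : Prop :=
  ∀ x p, γ.f x = some p → p.2.length = 2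

/-- Marks of the Schorr-Waite algorithm. -/
inductive Mark | O | L | R | X
deriving DecidableEq

/-- The `if-mark` transformation on a node's mark and children. -/
def ifMark (f : ℕ → ℕ) (x : ℕ) : Mark × List ℕ → Unit × List ℕ
  | (Mark.L, [_, r]) => ((), [f x, r])
  | (Mark.R, [l, _]) => ((), [l, f x])
  | (_, l) => ((), l)

end PGraph

namespace ReachAux

open PGraph

variable {T : Type}

lemma mem_dom_erase {γ : PGraph T} {a x : ℕ} :
    x ∈ (γ.erase a).dom ↔ x ≠ a ∧ x ∈ γ.dom := by
  simp [PGraph.erase, Finset.mem_erase]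

lemma adj_erase {γ : PGraph T} {a x : ℕ} (h : x ≠ a) :
    (γ.erase a).adj x = γ.adj x := by
  simp [PGraph.adj, PGraph.erase, h]

/-- Paths of a given length. -/
inductive P (γ : PGraph T) : ℕ → ℕ → ℕ → Prop
  | refl (x : ℕ) (h : x ∈ γ.dom) : P γ 0 x x
  | step (x z y n : ℕ) (hx : x ∈ γ.dom) (hz : z ∈ γ.adj x) (h : P γ n z y) :
      P γ (n + 1) x y

lemma P.of_erase {γ : PGraph T} {a n x y : ℕ} (h : P (γ.erase a) n x y) :
    P γ n x y := by
  induction h with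
  | refl x h => exact P.refl x (mem_dom_erase.mp h).2
  | step x z y n hx hz h ih =>
      rcases mem_dom_erase.mp hx with ⟨hxa, hxd⟩
      exact P.step x z y n hxd (by rwa [adj_erase hxa] at hz) ih

lemma P.trans {γ : PGraph T} {n m x y w : ℕ} (h : P γ n x y)
    (h' : P γ m y w) : P γ (n + m) x w := by
  induction h with
  | refl x h => simpa using h'
  | step x z y n hx hz h ih =>
      have := P.step x z w (n + m) hx hz (ih h')
      simpa [Nat.add_right_comm] using this

/-- A path either passes through `a` (and then `a` reaches the endpoint)
or lies entirely in `γ.erase a`. -/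
lemma P.split {γ : PGraph T} {n z y : ℕ} (a : ℕ) (h : P γ n z y) :
    (∃ m ≤ n, P γ m a y) ∨ (z ≠ a ∧ P (γ.erase a) n z y) := by
  induction h with
  | refl z h =>
      by_cases hza : z = a
      · exact Or.inl ⟨0, le_rfl, hza ▸ P.refl z h⟩
      · exact Or.inr ⟨hza, P.refl z (mem_dom_erase.mpr ⟨hza, h⟩)⟩
  | step z w y n hz hw h ih =>
      rcases ih with ⟨m, hm, hp⟩ | ⟨hwa, hp⟩
      · exact Or.inl ⟨m, hm.trans (Nat.le_succ n), hp⟩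
      · by_cases hza : z = a
        · subst hza
          exact Or.inl ⟨n + 1, le_rfl, P.step z w y n hz hw hp.of_erase⟩
        · exact Or.inr ⟨hza, P.step z w y n (mem_dom_erase.mpr ⟨hza, hz⟩)
            (by rwa [adj_erase hza]) hp⟩

lemma exists_P_of_mem_reach {n : ℕ} : ∀ {γ : PGraph T}, γ.dom.card = n →
    ∀ {x y : ℕ}, y ∈ γ.reach x → ∃ m, P γ m x y := by
  induction n using Nat.strong_induction_on with
  | _ n ih =>
    intro γ hn x y hy
    rw [PGraph.reach] at hy
    split at hy
    · rename_i hx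
      rcases hy with hy | hy
      · exact ⟨0, (Set.mem_singleton_iff.mp hy) ▸ P.refl x hx⟩
      · simp only [Set.mem_iUnion] at hy
        rcases hy with ⟨z, hz, hy⟩
        have hcard : (γ.erase x).dom.card < n := by
          simpa [PGraph.erase, hn] using Finset.card_erase_lt_of_mem hx
        rcases ih _ hcard rfl hy with ⟨m, hp⟩
        exact ⟨m + 1, P.step x z y m hx hz hp.of_erase⟩
    · exact absurd hy (Set.notMem_empty y)

lemma mem_reach_of_P {n : ℕ} : ∀ {γ : PGraph T} {x y : ℕ},
    P γ n x y → y ∈ γ.reach x := by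
  induction n using Nat.strong_induction_on with
  | _ n ih =>
    intro γ x y hp
    cases hp with
    | refl x hx =>
        rw [PGraph.reach]
        simp [hx]
    | step x z y m hx hz h =>
        rcases P.split x h with ⟨k, hk, hkp⟩ | ⟨hzx, hkp⟩
        · exact ih k (Nat.lt_succ_of_le hk) hkp
        · have : y ∈ (γ.erase x).reach z := ih m (Nat.lt_succ_self m) hkp
          rw [PGraph.reach]
          simp only [hx, dif_pos]
          right
          exact Set.mem_biUnion hz this

lemma mem_reach_iff {γ : PGraph T} {x y : ℕ} :
    y ∈ γ.reach x ↔ ∃ n, P γ n x y :=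
  ⟨exists_P_of_mem_reach rfl, fun ⟨_, hp⟩ => mem_reach_of_P hp⟩

end ReachAux

/-- Reachability splits at an intermediate node. -/
theorem reach_erase_of_mem (T : Type) (γ : PGraph T) (x y : ℕ)
    (h : y ∈ γ.reach x) :
    γ.reach x = (γ.erase y).reach x ∪ γ.reach y := by
  open ReachAux in
  ext w
  simp only [Set.mem_union, mem_reach_iff]
  constructor
  · rintro ⟨n, hp⟩
    rcases P.split y hp with ⟨m, _, hmp⟩ | ⟨_, hmp⟩
    · exact Or.inr ⟨m, hmp⟩
    · exact Or.inl ⟨n, hmp⟩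
  · rintro (⟨n, hp⟩ | ⟨n, hp⟩)
    · exact ⟨n, hp.of_erase⟩
    · rcases mem_reach_iff.mp h with ⟨m, hm⟩
      exact ⟨m + n, hm.trans hp⟩
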